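/- Under W ⊥ Y | X in the factorized IV model with β_1 ≥ β_0, the quantity 1 − ζ_{00.0} equals the minimum of the four Balke–Pearl upper-bound expressions for η_0: min{1 − ζ_{00.0}, 1 − ζ_{00.1}, ζ_{01.0}+ζ_{10.0}+ζ_{10.1}+ζ_{11.1}, ζ_{10.0}+ζ_{11.0}+ζ_{01.1}+ζ_{10.1}}. -/
import Mathlib

/-- Under `W ⊥ Y | X` with `β₁ ≥ β₀`, the quantity `1 - ζ_{00.0}` equals the minimum of the
four Balke–Pearl upper-bound expressions for `η₀`. Here
`ζ_{yx.w} = α_x^{[y=1]}(1-α_x)^{[y=0]} β_w^{[x=1]}(1-β_w)^{[x=0]}`. -/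
theorem stmt1 (a0 a1 b0 b1 : ℝ)
    (ha0 : a0 ∈ Set.Icc (0:ℝ) 1) (ha1 : a1 ∈ Set.Icc (0:ℝ) 1)
    (hb0 : b0 ∈ Set.Icc (0:ℝ) 1) (hb1 : b1 ∈ Set.Icc (0:ℝ) 1)
    (hb : b0 ≤ b1) :
    1 - (1 - a0) * (1 - b0) =
      min (min (1 - (1 - a0) * (1 - b0)) (1 - (1 - a0) * (1 - b1)))
          (min ((1 - a1) * b0 + a0 * (1 - b0) + a0 * (1 - b1) + a1 * b1)
               (a0 * (1 - b0) + a1 * b0 + (1 - a1) * b1 + a0 * (1 - b1))) := by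
  obtain ⟨h1, h2⟩ := ha0
  obtain ⟨h3, h4⟩ := ha1
  obtain ⟨h5, h6⟩ := hb0
  obtain ⟨h7, h8⟩ := hb1
  have hA : min (1-(1-a0)*(1-b0)) (1-(1-a0)*(1-b1)) = 1-(1-a0)*(1-b0) :=
    min_eq_left (by nlinarith [mul_nonneg (sub_nonneg.mpr h2) (sub_nonneg.mpr hb)])
  rw [hA, eq_comm, min_eq_left_iff]
  apply le_min
  · nlinarith [mul_nonneg h1 (sub_nonneg.mpr h8), mul_nonneg h3 h5,
      mul_nonneg (sub_nonneg.mpr h4) h7]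
  · nlinarith [mul_nonneg h1 (sub_nonneg.mpr h8), mul_nonneg h3 h5,
      mul_nonneg (sub_nonneg.mpr h4) h7, mul_nonneg h1 (sub_nonneg.mpr h6)]
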